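/- arXiv:1912.05775 — 2 statements merged into one kernel-verified Lean document; each statement's English description precedes it below -/
import Mathlib

section
/- For every n ≥ 2, χ_L(S_n(2)) = ⌈√n⌉ + 1. -/
open SimpleGraph

/-- Distance from a vertex to a set of vertices, `d(u,S) = min {d(u,v) : v ∈ S}`. -/
noncomputable def distToSet {V : Type*} (G : SimpleGraph V) (u : V) (S : Set V) : ℕ :=
  sInf (G.dist u '' S)

/-- `c` is a locating coloring of `G` with `k` colors: a proper coloring such that any two
distinct vertices are resolved by some color class. -/
def IsLocatingColoring {V : Type*} (G : SimpleGraph V) {k : ℕ} (c : V → Fin k) : Prop :=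
  (∀ u v : V, G.Adj u v → c u ≠ c v) ∧
  ∀ u v : V, u ≠ v →
    ∃ i : Fin k, distToSet G u (c ⁻¹' {i}) ≠ distToSet G v (c ⁻¹' {i})

/-- The locating chromatic number `χ_L(G)`: the least `k` admitting a locating `k`-coloring. -/
noncomputable def locatingChromaticNumber {V : Type*} (G : SimpleGraph V) : ℕ :=
  sInf {k : ℕ | ∃ c : V → Fin k, IsLocatingColoring G c}

/-- The vertex set of the palm `S_n(a_1, …, a_n)`: a hub `none` and, for each leg
`i : Fin n` (representing leg `i+1`), vertices `j : Fin (a (i+1))`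
(vertex `some ⟨i, j⟩` represents `a_{i+1, j+1}`). -/
def PalmVert (n : ℕ) (a : ℕ → ℕ) : Type :=
  Option ((i : Fin n) × Fin (a ((i : ℕ) + 1)))

/-- The palm `S_n(a_1, …, a_n)`: the star `K_{1,n}` whose `i`-th edge has been subdivided
`a_i - 1` times; the hub is joined to the first vertex of each leg, and consecutive
vertices along a leg are adjacent. -/
def Palm (n : ℕ) (a : ℕ → ℕ) : SimpleGraph (PalmVert n a) :=
  SimpleGraph.fromRel fun u v =>
    match u, v with
    | none, some ⟨_, j⟩ => (j : ℕ) = 0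
    | some ⟨i, j⟩, some ⟨i', j'⟩ => (i : ℕ) = (i' : ℕ) ∧ (j' : ℕ) = (j : ℕ) + 1
    | _, _ => False

namespace PalmTwo

variable {n : ℕ}

/-- explicit distance function on the regular palm `S_n(2)` -/
def D : PalmVert n (fun _ => 2) → PalmVert n (fun _ => 2) → ℕ
  | none, none => 0
  | none, some ⟨_, j⟩ => (j : ℕ) + 1
  | some ⟨_, j⟩, none => (j : ℕ) + 1
  | some ⟨i, j⟩, some ⟨i', j'⟩ =>
      if i = i' then (if j = j' then 0 else 1) else (j : ℕ) + (j' : ℕ) + 2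

abbrev G (n : ℕ) : SimpleGraph (PalmVert n (fun _ => 2)) := Palm n (fun _ => 2)

lemma adj_iff (u v : PalmVert n (fun _ => 2)) : (G n).Adj u v ↔ D u v = 1 := by
  show (SimpleGraph.fromRel _).Adj u v ↔ _
  rw [SimpleGraph.fromRel_adj]
  rcases u with _ | ⟨i, j⟩ <;> rcases v with _ | ⟨i', j'⟩
  · simp [D]
  · obtain ⟨j', hj'⟩ := j'
    simp only [D]
    constructor
    · rintro ⟨-, h | h⟩
      · simp_all
      · exact absurd h (by simp)
    · intro h
      refine ⟨(by intro h; cases h), Or.inl ?_⟩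
      simp_all
  · obtain ⟨j, hj⟩ := j
    simp only [D]
    constructor
    · rintro ⟨-, h | h⟩
      · exact absurd h (by simp)
      · simp_all
    · intro h
      refine ⟨(by intro h; cases h), Or.inr ?_⟩
      simp_all
  · obtain ⟨j, hj⟩ := j
    obtain ⟨j', hj'⟩ := j'
    simp only [D]
    by_cases hii : i = i'
    · subst hii
      simp only [if_pos rfl]
      constructor
      · rintro ⟨hne, h | h⟩ <;>
        · simp only [Fin.mk.injEq] at *
          split <;> simp_all <;> omega
      · intro h
        have hjj : j ≠ j' := by
          intro e; subst e; simp at h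
        rw [if_neg (fun e => hjj (congrArg Fin.val e))] at h
        interval_cases j <;> interval_cases j' <;> simp_all <;>
        · intro e
          injection e with e
          obtain ⟨-, h2⟩ := Sigma.mk.inj_iff.mp e
          exact absurd (congrArg Fin.val (eq_of_heq h2)) (by norm_num)
    · rw [if_neg hii]
      constructor
      · rintro ⟨hne, h | h⟩ <;> · exfalso; apply hii; exact Fin.ext (by simp_all)
      · omega

end PalmTwo

namespace PalmTwoB
open PalmTwo
variable {n : ℕ}

lemma D_self (u : PalmVert n (fun _ => 2)) : D u u = 0 := by
  rcases u with _ | ⟨i, j⟩ <;> simp [D]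

lemma D_adj_triangle {u w v : PalmVert n (fun _ => 2)} (h : D u w = 1) :
    D u v ≤ D w v + 1 := by
  rcases u with _ | ⟨i, j⟩ <;> rcases w with _ | ⟨i', j'⟩ <;> rcases v with _ | ⟨i'', j''⟩ <;>
    (try obtain ⟨j, hj⟩ := j) <;> (try obtain ⟨j', hj'⟩ := j') <;>
    (try obtain ⟨j'', hj''⟩ := j'') <;>
    (try interval_cases j) <;> (try interval_cases j') <;> (try interval_cases j'') <;>
    simp only [D, Fin.mk.injEq] at * <;>
    (try split_ifs at *) <;> (try subst_vars) <;> (try simp_all) <;> (try omega)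

end PalmTwoB

namespace PalmTwoC
open PalmTwo PalmTwoB
variable {n : ℕ}

lemma D_le_length {u v : PalmVert n (fun _ => 2)} (p : (G n).Walk u v) :
    D u v ≤ p.length := by
  induction p with
  | nil => simp [D_self]
  | cons h q ih =>
      simp only [SimpleGraph.Walk.length_cons]
      calc D _ _ ≤ D _ _ + 1 := D_adj_triangle ((adj_iff _ _).mp h)
        _ ≤ q.length + 1 := by omega

lemma adj_hub (i : Fin n) (hj : 0 < (fun _ : ℕ => 2) ((i:ℕ)+1)) :
    (G n).Adj none (some ⟨i, ⟨0, hj⟩⟩) := by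
  exact (adj_iff _ _).mpr (by simp [D])

lemma adj_leg (i : Fin n) (h0 : 0 < (fun _ : ℕ => 2) ((i:ℕ)+1))
    (h1 : 1 < (fun _ : ℕ => 2) ((i:ℕ)+1)) :
    (G n).Adj (some ⟨i, ⟨0, h0⟩⟩) (some ⟨i, ⟨1, h1⟩⟩) := by
  exact (adj_iff _ _).mpr (by simp [D])

lemma exists_walk (u v : PalmVert n (fun _ => 2)) :
    ∃ p : (G n).Walk u v, p.length = D u v := by
  rcases u with _ | ⟨i, j⟩ <;> rcases v with _ | ⟨i', j'⟩ <;>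
    (try obtain ⟨j, hj⟩ := j) <;> (try obtain ⟨j', hj'⟩ := j') <;>
    (try interval_cases j) <;> (try interval_cases j')
  · exact ⟨.nil, by simp [D]; rfl⟩
  · exact ⟨.cons (adj_hub i' hj') .nil, by simp [D]; rfl⟩
  · exact ⟨.cons (adj_hub i' (by norm_num)) (.cons (adj_leg i' (by norm_num) hj') .nil),
      by simp [D]; rfl⟩
  · exact ⟨.cons ((adj_hub i hj).symm) .nil, by simp [D]; rfl⟩
  · exact ⟨.cons ((adj_leg i (by norm_num) hj).symm)
      (.cons ((adj_hub i (by norm_num)).symm) .nil), by simp [D]; rfl⟩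
  · by_cases hii : i = i'
    · subst hii; exact ⟨.nil, by simp [D]; rfl⟩
    · exact ⟨.cons ((adj_hub i hj).symm) (.cons (adj_hub i' hj') .nil),
        by simp [D, hii]; rfl⟩
  · by_cases hii : i = i'
    · subst hii; exact ⟨.cons (adj_leg i hj hj') .nil, by simp [D]; rfl⟩
    · exact ⟨.cons ((adj_hub i hj).symm) (.cons (adj_hub i' (by norm_num))
        (.cons (adj_leg i' (by norm_num) hj') .nil)), by simp [D, hii]; rfl⟩
  · by_cases hii : i = i'
    · subst hii; exact ⟨.cons ((adj_leg i hj' hj).symm) .nil, by simp [D]; rfl⟩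
    · exact ⟨.cons ((adj_leg i (by norm_num) hj).symm) (.cons ((adj_hub i (by norm_num)).symm)
        (.cons (adj_hub i' hj') .nil)), by simp [D, hii]; rfl⟩
  · by_cases hii : i = i'
    · subst hii; exact ⟨.nil, by simp [D]; rfl⟩
    · exact ⟨.cons ((adj_leg i (by norm_num) hj).symm) (.cons ((adj_hub i (by norm_num)).symm)
        (.cons (adj_hub i' (by norm_num)) (.cons (adj_leg i' (by norm_num) hj') .nil))),
        by simp [D, hii]; rfl⟩

lemma reachable (u v : PalmVert n (fun _ => 2)) : (G n).Reachable u v :=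
  ⟨(exists_walk u v).choose⟩

lemma dist_eq (u v : PalmVert n (fun _ => 2)) : (G n).dist u v = D u v := by
  refine le_antisymm ?_ ?_
  · obtain ⟨p, hp⟩ := exists_walk u v
    simpa [hp] using SimpleGraph.dist_le p
  · obtain ⟨p, hp⟩ := (reachable u v).exists_walk_length_eq_dist
    rw [← hp]; exact D_le_length p

end PalmTwoC

namespace PalmTwoD
open PalmTwo PalmTwoB PalmTwoC
variable {n : ℕ}

def v0 (i : Fin n) : PalmVert n (fun _ => 2) := some ⟨i, ⟨0, by norm_num⟩⟩
def v1 (i : Fin n) : PalmVert n (fun _ => 2) := some ⟨i, ⟨1, by norm_num⟩⟩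

lemma vert_cases (u : PalmVert n (fun _ => 2)) : u = none ∨ ∃ i, u = v0 i ∨ u = v1 i := by
  rcases u with _ | ⟨i, j⟩
  · exact Or.inl rfl
  · obtain ⟨j, hj⟩ := j
    interval_cases j
    · exact Or.inr ⟨i, Or.inl rfl⟩
    · exact Or.inr ⟨i, Or.inr rfl⟩

lemma v0_ne_v1 (i i' : Fin n) : v0 i ≠ v1 i' := by
  intro e
  injection e with e
  have h1 : i = i' := congrArg Sigma.fst e
  subst h1
  have h2 := congrArg Fin.val (eq_of_heq (Sigma.mk.inj_iff.mp e).2)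
  norm_num at h2

lemma v0_inj {i i' : Fin n} (h : v0 i = v0 i') : i = i' := by
  injection h with h; cases h; rfl

lemma v1_inj {i i' : Fin n} (h : v1 i = v1 i') : i = i' := by
  injection h with h; cases h; rfl

@[simp] lemma v0_ne_none (i : Fin n) : (v0 i) ≠ none := by simp [v0]; exact Option.some_ne_none _
@[simp] lemma v1_ne_none (i : Fin n) : (v1 i) ≠ none := by simp [v1]; exact Option.some_ne_none _

@[simp] lemma D_none_none : D (n := n) none none = 0 := rfl
@[simp] lemma D_none_v0 (i : Fin n) : D none (v0 i) = 1 := rfl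
@[simp] lemma D_none_v1 (i : Fin n) : D none (v1 i) = 2 := rfl
@[simp] lemma D_v0_none (i : Fin n) : D (v0 i) none = 1 := rfl
@[simp] lemma D_v1_none (i : Fin n) : D (v1 i) none = 2 := rfl
@[simp] lemma D_v0_v0_self (i : Fin n) : D (v0 i) (v0 i) = 0 := by simp [D, v0]
@[simp] lemma D_v1_v1_self (i : Fin n) : D (v1 i) (v1 i) = 0 := by simp [D, v1]
@[simp] lemma D_v0_v1_self (i : Fin n) : D (v0 i) (v1 i) = 1 := by
  simp [D, v0, v1, Fin.ext_iff]
@[simp] lemma D_v1_v0_self (i : Fin n) : D (v1 i) (v0 i) = 1 := by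
  simp [D, v0, v1, Fin.ext_iff]
lemma D_v0_v0 {i i' : Fin n} (h : i ≠ i') : D (v0 i) (v0 i') = 2 := by
  simp [D, v0, if_neg h]
lemma D_v0_v1 {i i' : Fin n} (h : i ≠ i') : D (v0 i) (v1 i') = 3 := by
  simp [D, v0, v1, if_neg h]
lemma D_v1_v0 {i i' : Fin n} (h : i ≠ i') : D (v1 i) (v0 i') = 3 := by
  simp [D, v0, v1, if_neg h]
lemma D_v1_v1 {i i' : Fin n} (h : i ≠ i') : D (v1 i) (v1 i') = 4 := by
  simp [D, v0, v1, if_neg h]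

lemma D_eq_zero_iff {u v : PalmVert n (fun _ => 2)} : D u v = 0 ↔ u = v := by
  constructor
  · intro h
    rcases vert_cases u with rfl | ⟨i, rfl | rfl⟩ <;>
      rcases vert_cases v with rfl | ⟨i', rfl | rfl⟩ <;>
    first
      | rfl
      | simp_all
      | (by_cases hii : i = i' <;> subst_vars <;>
          simp_all [D_v0_v0, D_v0_v1, D_v1_v0, D_v1_v1])
  · rintro rfl; exact D_self u

lemma dist_eq_zero_iff {u v : PalmVert n (fun _ => 2)} : (G n).dist u v = 0 ↔ u = v := by
  rw [dist_eq]; exact D_eq_zero_iff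

lemma distToSet_eq_zero {S : Set (PalmVert n (fun _ => 2))} {u} (h : u ∈ S) :
    distToSet (G n) u S = 0 :=
  Nat.sInf_eq_zero.mpr (Or.inl ⟨u, h, SimpleGraph.dist_self⟩)

lemma distToSet_ne_zero {S : Set (PalmVert n (fun _ => 2))} {u w} (hu : u ∉ S) (hw : w ∈ S) :
    distToSet (G n) u S ≠ 0 := by
  intro h
  have hne : ((G n).dist u '' S).Nonempty := ⟨_, ⟨w, hw, rfl⟩⟩
  have hmem := Nat.sInf_mem hne
  rw [show sInf ((G n).dist u '' S) = 0 from h] at hmem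
  obtain ⟨x, hx, hdx⟩ := hmem
  exact hu (dist_eq_zero_iff.mp hdx ▸ hx)

lemma distToSet_eq_one {S : Set (PalmVert n (fun _ => 2))} {u w} (hu : u ∉ S) (hw : w ∈ S)
    (ha : (G n).Adj u w) : distToSet (G n) u S = 1 := by
  refine le_antisymm (Nat.sInf_le ⟨w, hw, (SimpleGraph.dist_eq_one_iff_adj).mpr ha⟩) ?_
  exact Nat.pos_of_ne_zero (distToSet_ne_zero hu hw)

lemma distToSet_ne_of_forall {S : Set (PalmVert n (fun _ => 2))} {v m} (hm : m ≠ 0)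
    (h : ∀ x ∈ S, (G n).dist v x ≠ m) : distToSet (G n) v S ≠ m := by
  intro he
  rcases S.eq_empty_or_nonempty with rfl | ⟨w, hw⟩
  · rw [distToSet, Set.image_empty, Nat.sInf_empty] at he; exact hm he.symm
  · have hne : ((G n).dist v '' S).Nonempty := ⟨_, ⟨w, hw, rfl⟩⟩
    have hmem := Nat.sInf_mem hne
    rw [show sInf ((G n).dist v '' S) = distToSet (G n) v S from rfl, he] at hmem
    obtain ⟨x, hx, hdx⟩ := hmem
    exact h x hx hdx

lemma distToSet_eq_two {S : Set (PalmVert n (fun _ => 2))} {u w} (hw : w ∈ S)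
    (h2 : (G n).dist u w = 2) (hall : ∀ x ∈ S, (G n).dist u x ≠ 0 ∧ (G n).dist u x ≠ 1) :
    distToSet (G n) u S = 2 := by
  have hle : distToSet (G n) u S ≤ 2 := Nat.sInf_le ⟨w, hw, h2⟩
  have hne : ((G n).dist u '' S).Nonempty := ⟨_, ⟨w, hw, rfl⟩⟩
  have hmem := Nat.sInf_mem hne
  obtain ⟨x, hx, hdx⟩ := hmem
  have := hall x hx
  rw [show sInf ((G n).dist u '' S) = distToSet (G n) u S from rfl] at hdx
  omega

end PalmTwoD

namespace PalmTwoU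
open PalmTwo PalmTwoB PalmTwoC PalmTwoD

variable {n k : ℕ}

def c1 (e : Fin n ↪ Fin k × Fin k) (i : Fin n) : Fin (k+1) :=
  ⟨((e i).1 : ℕ) + 1, Nat.succ_lt_succ (e i).1.isLt⟩

def c2 (e : Fin n ↪ Fin k × Fin k) (i : Fin n) : Fin (k+1) :=
  if ((e i).2 : ℕ) = ((e i).1 : ℕ) then ⟨0, Nat.succ_pos k⟩
  else ⟨((e i).2 : ℕ) + 1, Nat.succ_lt_succ (e i).2.isLt⟩

def col (e : Fin n ↪ Fin k × Fin k) : PalmVert n (fun _ => 2) → Fin (k+1) := fun u =>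
  match u with
  | none => ⟨0, Nat.succ_pos k⟩
  | some ⟨i, j⟩ => if (j : ℕ) = 0 then c1 e i else c2 e i

variable {e : Fin n ↪ Fin k × Fin k}

@[simp] lemma col_none : col e none = ⟨0, Nat.succ_pos k⟩ := rfl
@[simp] lemma col_v0 (i : Fin n) : col e (v0 i) = c1 e i := rfl
@[simp] lemma col_v1 (i : Fin n) : col e (v1 i) = c2 e i := by
  simp [col, v1]

lemma c1_ne_zero (i : Fin n) : c1 e i ≠ ⟨0, Nat.succ_pos k⟩ := by
  simp [c1, Fin.ext_iff]

lemma c2_ne_c1 (i : Fin n) : c2 e i ≠ c1 e i := by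
  unfold c1 c2
  split_ifs with h <;> simp [Fin.ext_iff] <;> omega

lemma pair_inj {i i' : Fin n} (h1 : c1 e i = c1 e i') (h2 : c2 e i = c2 e i') : i = i' := by
  have h1' : ((e i).1 : ℕ) = ((e i').1 : ℕ) := by
    have := congrArg Fin.val h1; simpa [c1] using this
  have h2' : ((e i).2 : ℕ) = ((e i').2 : ℕ) := by
    have := congrArg Fin.val h2
    unfold c2 at this
    split_ifs at this <;> simp_all <;> omega
  apply e.injective
  apply Prod.ext <;> exact Fin.ext (by omega)

end PalmTwoU

namespace PalmTwoU
open PalmTwo PalmTwoB PalmTwoC PalmTwoD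

variable {n k : ℕ} {e : Fin n ↪ Fin k × Fin k}

lemma mem_class {x : PalmVert n (fun _ => 2)} {m : Fin (k+1)} :
    x ∈ (col e) ⁻¹' {m} ↔ col e x = m := by
  simp [Set.mem_preimage]

lemma resolve_ne_color {K : ℕ} (c : PalmVert n (fun _ => 2) → Fin K)
    {u v : PalmVert n (fun _ => 2)} (h : c u ≠ c v) :
    distToSet (G n) u (c ⁻¹' {c u}) ≠ distToSet (G n) v (c ⁻¹' {c u}) := by
  rw [distToSet_eq_zero (by simp [Set.mem_preimage] : u ∈ c ⁻¹' {c u})]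
  exact Ne.symm (distToSet_ne_zero (by simpa [Set.mem_preimage] using h.symm)
    (by simp [Set.mem_preimage] : u ∈ c ⁻¹' {c u}))

lemma adj_none_v0 (i : Fin n) : (G n).Adj none (v0 i) := by
  exact (adj_iff _ _).mpr (by simp)
lemma adj_v0_v1 (i : Fin n) : (G n).Adj (v0 i) (v1 i) := by
  rw [adj_iff]; simp

lemma key_01 (i i' : Fin n) (h : c1 e i = c2 e i') :
    ∃ m : Fin (k+1), distToSet (G n) (v0 i) ((col e) ⁻¹' {m}) ≠
      distToSet (G n) (v1 i') ((col e) ⁻¹' {m}) := by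
  refine ⟨⟨0, Nat.succ_pos k⟩, ?_⟩
  rw [distToSet_eq_one (by simp [mem_class, c1, Fin.ext_iff])
    (mem_class.mpr col_none) (adj_none_v0 i).symm]
  refine Ne.symm (distToSet_ne_of_forall one_ne_zero ?_)
  intro x hx hd
  rw [mem_class] at hx
  rw [dist_eq] at hd
  rcases vert_cases x with rfl | ⟨t, rfl | rfl⟩
  · simp at hd
  · by_cases ht : i' = t
    · subst ht
      rw [col_v0] at hx
      exact c1_ne_zero i' hx
    · rw [D_v1_v0 ht] at hd; omega
  · by_cases ht : i' = t
    · subst ht; simp at hd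
    · rw [D_v1_v1 ht] at hd; omega

lemma key_11 (i i' : Fin n) (hii : i ≠ i') (h : c2 e i = c2 e i') :
    ∃ m : Fin (k+1), distToSet (G n) (v1 i) ((col e) ⁻¹' {m}) ≠
      distToSet (G n) (v1 i') ((col e) ⁻¹' {m}) := by
  have hc1 : c1 e i ≠ c1 e i' := fun h1 => hii (pair_inj h1 h)
  refine ⟨c1 e i, ?_⟩
  rw [distToSet_eq_one (by simp [mem_class, c2_ne_c1])
    (mem_class.mpr (col_v0 i)) (adj_v0_v1 i).symm]
  refine Ne.symm (distToSet_ne_of_forall one_ne_zero ?_)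
  intro x hx hd
  rw [mem_class] at hx
  rw [dist_eq] at hd
  rcases vert_cases x with rfl | ⟨t, rfl | rfl⟩
  · simp at hd
  · by_cases ht : i' = t
    · subst ht
      rw [col_v0] at hx
      exact hc1 hx.symm
    · rw [D_v1_v0 ht] at hd; omega
  · by_cases ht : i' = t
    · subst ht; simp at hd
    · rw [D_v1_v1 ht] at hd; omega

lemma key_00_aux (i i' : Fin n) (hne0 : c2 e i ≠ ⟨0, Nat.succ_pos k⟩)
    (hc2 : c2 e i ≠ c2 e i') :
    distToSet (G n) (v0 i) ((col e) ⁻¹' {c2 e i}) ≠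
      distToSet (G n) (v0 i') ((col e) ⁻¹' {c2 e i}) := by
  rw [distToSet_eq_one (by simp [mem_class]; exact (c2_ne_c1 i).symm)
    (mem_class.mpr (col_v1 i)) (adj_v0_v1 i)]
  refine Ne.symm (distToSet_ne_of_forall one_ne_zero ?_)
  intro x hx hd
  rw [mem_class] at hx
  rw [dist_eq] at hd
  rcases vert_cases x with rfl | ⟨t, rfl | rfl⟩
  · rw [col_none] at hx
    exact hne0 hx.symm
  · by_cases ht : i' = t
    · subst ht; simp at hd
    · rw [D_v0_v0 ht] at hd; omega
  · by_cases ht : i' = t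
    · subst ht
      rw [col_v1] at hx
      exact hc2 hx.symm
    · rw [D_v0_v1 ht] at hd; omega

lemma key_00 (i i' : Fin n) (hii : i ≠ i') (h : c1 e i = c1 e i') :
    ∃ m : Fin (k+1), distToSet (G n) (v0 i) ((col e) ⁻¹' {m}) ≠
      distToSet (G n) (v0 i') ((col e) ⁻¹' {m}) := by
  have hc2 : c2 e i ≠ c2 e i' := fun h2 => hii (pair_inj h h2)
  by_cases h0 : c2 e i = ⟨0, Nat.succ_pos k⟩
  · have hne0' : c2 e i' ≠ ⟨0, Nat.succ_pos k⟩ := fun h' => hc2 (h0.trans h'.symm)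
    exact ⟨c2 e i', Ne.symm (key_00_aux i' i hne0' (Ne.symm hc2))⟩
  · exact ⟨c2 e i, key_00_aux i i' h0 hc2⟩

end PalmTwoU

namespace PalmTwoU
open PalmTwo PalmTwoB PalmTwoC PalmTwoD

variable {n k : ℕ} {e : Fin n ↪ Fin k × Fin k}

lemma key_hub (hn : 2 ≤ n) (i' : Fin n) (h : (⟨0, Nat.succ_pos k⟩ : Fin (k+1)) = c2 e i') :
    ∃ m : Fin (k+1), distToSet (G n) (none : PalmVert n (fun _ => 2)) ((col e) ⁻¹' {m}) ≠
      distToSet (G n) (v1 i') ((col e) ⁻¹' {m}) := by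
  by_cases hA : ∃ i'' : Fin n, c1 e i'' ≠ c1 e i'
  · obtain ⟨i'', hA⟩ := hA
    refine ⟨c1 e i'', ?_⟩
    rw [distToSet_eq_one (by simp [mem_class]; exact Ne.symm (c1_ne_zero i''))
      (mem_class.mpr (col_v0 i'')) (adj_none_v0 i'')]
    refine Ne.symm (distToSet_ne_of_forall one_ne_zero ?_)
    intro x hx hd
    rw [mem_class] at hx
    rw [dist_eq] at hd
    rcases vert_cases x with rfl | ⟨t, rfl | rfl⟩
    · simp at hd
    · by_cases ht : i' = t
      · subst ht
        rw [col_v0] at hx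
        exact hA hx.symm
      · rw [D_v1_v0 ht] at hd; omega
    · by_cases ht : i' = t
      · subst ht; simp at hd
      · rw [D_v1_v1 ht] at hd; omega
  · push_neg at hA
    have : Nontrivial (Fin n) := Fin.nontrivial_iff_two_le.mpr hn
    obtain ⟨i'', hii⟩ := exists_ne i'
    have hc2 : c2 e i'' ≠ c2 e i' := fun h2 => hii (pair_inj (hA i'') h2)
    refine ⟨c2 e i'', ?_⟩
    have hmem : v1 i'' ∈ (col e) ⁻¹' {c2 e i''} := mem_class.mpr (col_v1 i'')
    rw [show distToSet (G n) (none : PalmVert n (fun _ => 2)) ((col e) ⁻¹' {c2 e i''}) = 2 from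
      distToSet_eq_two hmem (by rw [dist_eq none (v1 i'')]; rfl) ?hall]
    case hall =>
      intro x hx
      rw [mem_class] at hx
      rw [dist_eq none x]
      rcases vert_cases x with rfl | ⟨t, rfl | rfl⟩
      · rw [col_none] at hx
        exact absurd (h.symm.trans hx) (Ne.symm hc2)
      · exfalso
        rw [col_v0] at hx
        rw [hA t, ← hA i''] at hx
        exact c2_ne_c1 (e := e) i'' hx.symm
      · constructor <;> (rw [D_none_v1]; omega)
    refine Ne.symm (distToSet_ne_of_forall two_ne_zero ?_)
    intro x hx hd
    rw [mem_class] at hx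
    rw [dist_eq] at hd
    rcases vert_cases x with rfl | ⟨t, rfl | rfl⟩
    · rw [col_none] at hx
      exact Ne.symm hc2 (h.symm.trans hx)
    · by_cases ht : i' = t
      · subst ht; simp at hd
      · rw [D_v1_v0 ht] at hd; omega
    · by_cases ht : i' = t
      · subst ht; simp at hd
      · rw [D_v1_v1 ht] at hd; omega

end PalmTwoU

namespace PalmTwoU
open PalmTwo PalmTwoB PalmTwoC PalmTwoD

variable {n k : ℕ} {e : Fin n ↪ Fin k × Fin k}

theorem isLocating (hn : 2 ≤ n) : IsLocatingColoring (G n) (col e) := by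
  constructor
  · intro u v hadj
    rw [adj_iff] at hadj
    rcases vert_cases u with rfl | ⟨i, rfl | rfl⟩ <;>
      rcases vert_cases v with rfl | ⟨i', rfl | rfl⟩
    · simp at hadj
    · simp only [col_none, col_v0]
      exact Ne.symm (c1_ne_zero i')
    · simp at hadj
    · simp only [col_none, col_v0]
      exact c1_ne_zero i
    · by_cases hii : i = i'
      · subst hii; simp at hadj
      · rw [D_v0_v0 hii] at hadj; omega
    · by_cases hii : i = i'
      · subst hii
        simp only [col_v0, col_v1]
        exact Ne.symm (c2_ne_c1 i)
      · rw [D_v0_v1 hii] at hadj; omega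
    · simp at hadj
    · by_cases hii : i = i'
      · subst hii
        simp only [col_v0, col_v1]
        exact c2_ne_c1 i
      · rw [D_v1_v0 hii] at hadj; omega
    · by_cases hii : i = i'
      · subst hii; simp at hadj
      · rw [D_v1_v1 hii] at hadj; omega
  · intro u v huv
    by_cases hc : col e u = col e v
    · rcases vert_cases u with rfl | ⟨i, rfl | rfl⟩ <;>
        rcases vert_cases v with rfl | ⟨i', rfl | rfl⟩
      · exact absurd rfl huv
      · rw [col_none, col_v0] at hc
        exact absurd hc.symm (c1_ne_zero i')
      · rw [col_none, col_v1] at hc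
        exact key_hub hn i' hc
      · rw [col_none, col_v0] at hc
        exact absurd hc (c1_ne_zero i)
      · have hii : i ≠ i' := fun h => huv (by rw [h])
        rw [col_v0, col_v0] at hc
        exact key_00 i i' hii hc
      · rw [col_v0, col_v1] at hc
        exact key_01 i i' hc
      · rw [col_none, col_v1] at hc
        obtain ⟨m, hm⟩ := key_hub (e := e) hn i hc.symm
        exact ⟨m, hm.symm⟩
      · rw [col_v0, col_v1] at hc
        obtain ⟨m, hm⟩ := key_01 (e := e) i' i hc.symm
        exact ⟨m, hm.symm⟩
      · have hii : i ≠ i' := fun h => huv (by rw [h])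
        rw [col_v1, col_v1] at hc
        exact key_11 i i' hii hc
    · exact ⟨col e u, resolve_ne_color (col e) hc⟩

end PalmTwoU

namespace PalmTwoL
open PalmTwo PalmTwoB PalmTwoC PalmTwoD

variable {n : ℕ}

def sw (i i' : Fin n) : PalmVert n (fun _ => 2) → PalmVert n (fun _ => 2) := fun x =>
  match x with
  | none => none
  | some ⟨t, j⟩ => some ⟨Equiv.swap i i' t, j⟩

@[simp] lemma sw_none (i i' : Fin n) : sw i i' none = none := rfl
@[simp] lemma sw_v0 (i i' t : Fin n) : sw i i' (v0 t) = v0 (Equiv.swap i i' t) := rfl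
@[simp] lemma sw_v1 (i i' t : Fin n) : sw i i' (v1 t) = v1 (Equiv.swap i i' t) := rfl

lemma sw_invol (i i' : Fin n) (x : PalmVert n (fun _ => 2)) : sw i i' (sw i i' x) = x := by
  rcases x with _ | ⟨t, j⟩
  · rfl
  · simp [sw]; rfl

lemma D_sw (i i' : Fin n) (x y : PalmVert n (fun _ => 2)) :
    D (sw i i' x) (sw i i' y) = D x y := by
  rcases x with _ | ⟨t, j⟩ <;> rcases y with _ | ⟨t', j'⟩
  · rfl
  · rfl
  · rfl
  · simp only [sw, D, Equiv.apply_eq_iff_eq]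

variable {K : ℕ} {c : PalmVert n (fun _ => 2) → Fin K}

lemma col_sw {i i' : Fin n} (hp0 : c (v0 i) = c (v0 i')) (hp1 : c (v1 i) = c (v1 i'))
    (x : PalmVert n (fun _ => 2)) : c (sw i i' x) = c x := by
  rcases vert_cases x with rfl | ⟨t, rfl | rfl⟩
  · rfl
  · rw [sw_v0]
    rcases eq_or_ne t i with rfl | hti
    · rw [Equiv.swap_apply_left]; exact hp0.symm
    · rcases eq_or_ne t i' with rfl | hti'
      · rw [Equiv.swap_apply_right]; exact hp0
      · rw [Equiv.swap_apply_of_ne_of_ne hti hti']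
  · rw [sw_v1]
    rcases eq_or_ne t i with rfl | hti
    · rw [Equiv.swap_apply_left]; exact hp1.symm
    · rcases eq_or_ne t i' with rfl | hti'
      · rw [Equiv.swap_apply_right]; exact hp1
      · rw [Equiv.swap_apply_of_ne_of_ne hti hti']

lemma image_sub {i i' : Fin n} (hp0 : c (v0 i) = c (v0 i')) (hp1 : c (v1 i) = c (v1 i'))
    (m : Fin K) :
    (G n).dist (v0 i') '' (c ⁻¹' {m}) ⊆ (G n).dist (v0 i) '' (c ⁻¹' {m}) := by
  rintro - ⟨x, hx, rfl⟩
  refine ⟨sw i i' x, ?_, ?_⟩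
  · simp only [Set.mem_preimage, Set.mem_singleton_iff] at hx ⊢
    rw [col_sw hp0 hp1 x]; exact hx
  · have h1 : sw i i' (v0 i') = v0 i := by rw [sw_v0, Equiv.swap_apply_right]
    rw [dist_eq, dist_eq, ← h1, ← sw_invol i i' x, D_sw, sw_invol]

lemma codes_eq {i i' : Fin n} (hp0 : c (v0 i) = c (v0 i')) (hp1 : c (v1 i) = c (v1 i'))
    (m : Fin K) :
    distToSet (G n) (v0 i) (c ⁻¹' {m}) = distToSet (G n) (v0 i') (c ⁻¹' {m}) := by
  unfold distToSet
  congr 1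
  have hsw : Equiv.swap i' i = Equiv.swap i i' := Equiv.swap_comm i' i
  have h2 := image_sub (c := c) (i := i') (i' := i) hp0.symm hp1.symm m
  refine Set.Subset.antisymm ?_ (image_sub hp0 hp1 m)
  exact h2

lemma pairs_inj (hloc : IsLocatingColoring (G n) c) :
    Function.Injective (fun i : Fin n => (c (v0 i), c (v1 i))) := by
  intro i i' hg
  simp only [Prod.mk.injEq] at hg
  by_contra hii
  have hne : v0 i ≠ v0 i' := fun h => hii (v0_inj h)
  obtain ⟨m, hm⟩ := hloc.2 (v0 i) (v0 i') hne
  exact hm (codes_eq hg.1 hg.2 m)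

lemma card_bound (hloc : IsLocatingColoring (G n) c) : n ≤ (K - 1) * (K - 1) := by
  rcases K with - | K'
  · exact (c none).elim0
  · have hprop1 : ∀ i : Fin n, c (v0 i) ≠ c none :=
      fun i => (hloc.1 none (v0 i) (PalmTwoU.adj_none_v0 i)).symm
    have hprop2 : ∀ i : Fin n, c (v1 i) ≠ c (v0 i) :=
      fun i => (hloc.1 (v0 i) (v1 i) (PalmTwoU.adj_v0_v1 i)).symm
    set φ : Fin n → {x : Fin (K' + 1) // x ≠ c none} × {x : Fin (K' + 1) // x ≠ 0} :=
      fun i => (⟨c (v0 i), hprop1 i⟩, ⟨c (v1 i) - c (v0 i), sub_ne_zero.mpr (hprop2 i)⟩)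
      with hφ
    have hinj : Function.Injective φ := by
      intro i i' h
      rw [hφ, Prod.ext_iff, Subtype.ext_iff, Subtype.ext_iff] at h
      obtain ⟨h1, h2⟩ := h
      simp only at h1 h2
      rw [h1] at h2
      have h2' : c (v1 i) = c (v1 i') := sub_left_injective h2
      exact pairs_inj hloc (by simp only [Prod.mk.injEq]; exact ⟨h1, h2'⟩)
    have := Fintype.card_le_of_injective φ hinj
    simpa [Fintype.card_subtype_compl] using this

end PalmTwoL

/-- For every `n ≥ 2`, `χ_L(S_n(2)) = ⌈√n⌉ + 1`. -/
theorem locatingChromaticNumber_regularPalm_two (n : ℕ) (hn : 2 ≤ n) :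
    (locatingChromaticNumber (Palm n (fun _ => 2)) : ℤ) = ⌈Real.sqrt n⌉ + 1 := by
  set r := Real.sqrt n with hr
  have hnpos : (0:ℝ) < n := by positivity
  have h0 : (0:ℝ) < r := Real.sqrt_pos.mpr hnpos
  have hceil : 0 < ⌈r⌉ := Int.ceil_pos.mpr h0
  set k : ℕ := (⌈r⌉).toNat with hkdef
  have hk : (k : ℤ) = ⌈r⌉ := Int.toNat_of_nonneg hceil.le
  have hk1 : 1 ≤ k := by omega
  have hkr : r ≤ (k : ℝ) := by
    have := Int.le_ceil r
    have hcast : ((k : ℤ) : ℝ) = (k : ℝ) := by push_cast; ring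
    rw [← hk] at this
    exact_mod_cast this
  have hnr : (n:ℝ) = r ^ 2 := (Real.sq_sqrt hnpos.le).symm
  have hupper : n ≤ k * k := by
    have : (n:ℝ) ≤ (k:ℝ) * (k:ℝ) := by nlinarith
    exact_mod_cast this
  have hlower : (k - 1) * (k - 1) < n := by
    have hlt : ((k:ℝ) - 1) < r := by
      have := Int.ceil_lt_add_one r
      rw [← hk] at this
      push_cast at this
      linarith
    have hge : (0:ℝ) ≤ (k:ℝ) - 1 := by
      have : (1:ℝ) ≤ (k:ℝ) := by exact_mod_cast hk1
      linarith
    have h2 : ((k:ℝ) - 1) * ((k:ℝ) - 1) < (n:ℝ) := by nlinarith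
    have hcast : (((k - 1) * (k - 1) : ℕ) : ℝ) = ((k:ℝ) - 1) * ((k:ℝ) - 1) := by
      push_cast [Nat.cast_sub hk1]
      ring
    rw [← hcast] at h2
    exact_mod_cast h2
  obtain ⟨e⟩ : Nonempty (Fin n ↪ Fin k × Fin k) := by
    apply Function.Embedding.nonempty_of_card_le
    simpa using hupper
  have hmem : k + 1 ∈ {K : ℕ | ∃ c : PalmVert n (fun _ => 2) → Fin K,
      IsLocatingColoring (Palm n (fun _ => 2)) c} :=
    ⟨PalmTwoU.col e, PalmTwoU.isLocating hn⟩
  have hbound : ∀ K ∈ {K : ℕ | ∃ c : PalmVert n (fun _ => 2) → Fin K,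
      IsLocatingColoring (Palm n (fun _ => 2)) c}, k + 1 ≤ K := by
    rintro K ⟨c, hloc⟩
    have hb := PalmTwoL.card_bound hloc
    by_contra hcon
    have h1 : K - 1 ≤ k - 1 := by omega
    have h2 := Nat.mul_le_mul h1 h1
    omega
  have hval : locatingChromaticNumber (Palm n (fun _ => 2)) = k + 1 :=
    le_antisymm (Nat.sInf_le hmem) (le_csInf ⟨k + 1, hmem⟩ hbound)
  rw [hval]
  push_cast
  omega
end

section
/- χ_L(S_n(3)) = (1 + o(1))·(4n)^{1/3} as n → ∞; that is, lim_{n→∞} χ_L(S_n(3)) / (4n)^{1/3} = 1. -/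
open SimpleGraph

namespace PalmAux

variable {n : ℕ}

abbrev V3 (n : ℕ) := PalmVert n (fun _ => 3)

abbrev G3 (n : ℕ) : SimpleGraph (V3 n) := Palm n (fun _ => 3)

/-- leg vertex -/
def pv (i : Fin n) (j : Fin 3) : V3 n := some ⟨i, j⟩

lemma pv_ne_hub (i : Fin n) (j : Fin 3) : pv i j ≠ (none : V3 n) := by simp [pv]; exact Option.some_ne_none _

lemma adj_hub (i : Fin n) (j : Fin 3) (hj : (j : ℕ) = 0) : (G3 n).Adj none (pv i j) := by
  refine (fromRel_adj _ _ _).mpr ?_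
  exact ⟨(pv_ne_hub i j).symm, Or.inl hj⟩

lemma adj_step (i : Fin n) (j j' : Fin 3) (h : (j' : ℕ) = (j : ℕ) + 1) :
    (G3 n).Adj (pv i j) (pv i j') := by
  rw [G3, Palm, fromRel_adj]
  refine ⟨?_, Or.inl ⟨rfl, h⟩⟩
  simp only [pv, ne_eq, Option.some.injEq, Sigma.mk.inj_iff, heq_eq_eq, true_and]
  intro he
  injection he with he1
  have h2 : j = j' := eq_of_heq (Sigma.mk.inj_iff.mp he1).2
  subst h2
  omega

/-- distance formula -/
def Dst : V3 n → V3 n → ℕ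
  | none, none => 0
  | none, some p => (p.2 : ℕ) + 1
  | some p, none => (p.2 : ℕ) + 1
  | some p, some q => if p.1 = q.1 then Nat.dist (p.2 : ℕ) (q.2 : ℕ) else (p.2 : ℕ) + (q.2 : ℕ) + 2

@[simp] lemma Dst_nn : Dst (none : V3 n) none = 0 := rfl
@[simp] lemma Dst_ns (p) : Dst (none : V3 n) (some p) = (p.2 : ℕ) + 1 := rfl
@[simp] lemma Dst_sn (p) : Dst (some p : V3 n) none = (p.2 : ℕ) + 1 := rfl
@[simp] lemma Dst_ss (p q) : Dst (some p : V3 n) (some q) =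
    if p.1 = q.1 then Nat.dist (p.2 : ℕ) (q.2 : ℕ) else (p.2 : ℕ) + (q.2 : ℕ) + 2 := rfl

lemma Dst_self (u : V3 n) : Dst u u = 0 := by
  rcases u with _ | ⟨i, j⟩ <;> simp [Nat.dist_self]

lemma dst_lip (t u v : V3 n) (h : (G3 n).Adj u v) : Dst u t ≤ Dst v t + 1 := by
  rw [G3, Palm, fromRel_adj] at h
  obtain ⟨hne, hrel⟩ := h
  rcases u with _ | ⟨i, j⟩ <;> rcases v with _ | ⟨i', j'⟩
  · exact absurd rfl hne
  -- none, some
  · have hj' : (j' : ℕ) = 0 := by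
      rcases hrel with h | h
      · exact h
      · exact h.elim
    rcases t with _ | ⟨l, m⟩ <;>
      simp only [Dst_nn, Dst_ns, Dst_sn, Dst_ss] <;>
      (try split_ifs) <;> (try simp only [Nat.dist]) <;> omega
  -- some, none
  · have hj : (j : ℕ) = 0 := by
      rcases hrel with h | h
      · exact h.elim
      · exact h
    rcases t with _ | ⟨l, m⟩ <;>
      simp only [Dst_nn, Dst_ns, Dst_sn, Dst_ss] <;>
      (try split_ifs) <;> (try simp only [Nat.dist]) <;> omega
  -- some, some
  · have hrel' : (i : ℕ) = (i' : ℕ) ∧ ((j' : ℕ) = (j : ℕ) + 1 ∨ (j : ℕ) = (j' : ℕ) + 1) := by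
      rcases hrel with ⟨h1, h2⟩ | ⟨h1, h2⟩
      · exact ⟨h1, Or.inl h2⟩
      · exact ⟨h1.symm, Or.inr h2⟩
    have hii : i = i' := Fin.ext hrel'.1
    subst hii
    rcases t with _ | ⟨l, m⟩ <;>
      simp only [Dst_nn, Dst_ns, Dst_sn, Dst_ss] <;>
      (try split_ifs) <;> (try simp only [Nat.dist]) <;> omega

lemma walk_ge (t : V3 n) : ∀ {u : V3 n} (p : (G3 n).Walk u t), Dst u t ≤ p.length := by
  intro u p
  induction p with
  | nil => simp [Dst_self]
  | cons h p ih =>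
    rw [Walk.length_cons]
    exact (dst_lip _ _ _ h).trans (by omega)

def wHub (i : Fin n) : (j : Fin 3) → {p : (G3 n).Walk none (pv i j) // p.length = (j : ℕ) + 1}
  | ⟨0, _⟩ => ⟨(adj_hub i ⟨0, by omega⟩ rfl).toWalk, by rfl⟩
  | ⟨1, _⟩ => ⟨Walk.cons (adj_hub i ⟨0, by omega⟩ rfl)
      (adj_step i ⟨0, by omega⟩ ⟨1, by omega⟩ rfl).toWalk, by rfl⟩
  | ⟨2, _⟩ => ⟨Walk.cons (adj_hub i ⟨0, by omega⟩ rfl)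
      (Walk.cons (adj_step i ⟨0, by omega⟩ ⟨1, by omega⟩ rfl)
        (adj_step i ⟨1, by omega⟩ ⟨2, by omega⟩ rfl).toWalk), by rfl⟩

lemma reach_hub (u : V3 n) : (G3 n).Reachable none u := by
  rcases u with _ | ⟨i, j⟩
  · exact Reachable.refl _
  · exact ⟨(wHub i j).1⟩

lemma reach (u v : V3 n) : (G3 n).Reachable u v :=
  (reach_hub u).symm.trans (reach_hub v)

lemma dist_hub_le (i : Fin n) (j : Fin 3) : (G3 n).dist none (pv i j) ≤ (j : ℕ) + 1 := by
  have := dist_le (wHub i j).1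
  rwa [(wHub i j).2] at this

def wLeg (i : Fin n) : (j j' : Fin 3) →
    {p : (G3 n).Walk (pv i j) (pv i j') // p.length = Nat.dist (j : ℕ) (j' : ℕ)}
  | ⟨0, _⟩, ⟨0, _⟩ => ⟨Walk.nil, by simp [Nat.dist]⟩
  | ⟨1, _⟩, ⟨1, _⟩ => ⟨Walk.nil, by simp [Nat.dist]⟩
  | ⟨2, _⟩, ⟨2, _⟩ => ⟨Walk.nil, by simp [Nat.dist]⟩
  | ⟨0, _⟩, ⟨1, _⟩ => ⟨(adj_step i ⟨0, by omega⟩ ⟨1, by omega⟩ rfl).toWalk, by simp [Nat.dist]⟩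
  | ⟨1, _⟩, ⟨2, _⟩ => ⟨(adj_step i ⟨1, by omega⟩ ⟨2, by omega⟩ rfl).toWalk, by simp [Nat.dist]⟩
  | ⟨0, _⟩, ⟨2, _⟩ => ⟨Walk.cons (adj_step i ⟨0, by omega⟩ ⟨1, by omega⟩ rfl)
      (adj_step i ⟨1, by omega⟩ ⟨2, by omega⟩ rfl).toWalk, by simp [Nat.dist]⟩
  | ⟨1, _⟩, ⟨0, _⟩ => ⟨(adj_step i ⟨0, by omega⟩ ⟨1, by omega⟩ rfl).toWalk.reverse,
      by simp [Nat.dist]⟩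
  | ⟨2, _⟩, ⟨1, _⟩ => ⟨(adj_step i ⟨1, by omega⟩ ⟨2, by omega⟩ rfl).toWalk.reverse,
      by simp [Nat.dist]⟩
  | ⟨2, _⟩, ⟨0, _⟩ => ⟨(Walk.cons (adj_step i ⟨0, by omega⟩ ⟨1, by omega⟩ rfl)
      (adj_step i ⟨1, by omega⟩ ⟨2, by omega⟩ rfl).toWalk).reverse, by simp [Nat.dist]⟩

theorem dist_eq (u v : V3 n) : (G3 n).dist u v = Dst u v := by
  refine le_antisymm ?_ ?_
  · rcases u with _ | ⟨i, j⟩ <;> rcases v with _ | ⟨i', j'⟩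
    · exact le_of_eq SimpleGraph.dist_self
    · exact dist_hub_le i' j'
    · erw [SimpleGraph.dist_comm]
      exact dist_hub_le i j
    · by_cases hii : i = i'
      · subst hii
        rw [Dst_ss, if_pos rfl]
        have := dist_le (wLeg i j j').1
        rwa [(wLeg i j j').2] at this
      · rw [Dst_ss, if_neg hii]
        have hw := dist_le ((wHub i j).1.reverse.append (wHub i' j').1)
        erw [Walk.length_append, Walk.length_reverse, (wHub i j).2, (wHub i' j').2] at hw
        show (G3 n).dist (pv i j) (pv i' j') ≤ (j : ℕ) + (j' : ℕ) + 2
        exact hw.trans (by omega)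
  · obtain ⟨p, hp⟩ := (reach u v).exists_walk_length_eq_dist
    rw [← hp]
    exact walk_ge v p

lemma distToSet_le_dist {S : Set (V3 n)} {u w : V3 n} (hw : w ∈ S) :
    distToSet (G3 n) u S ≤ (G3 n).dist u w :=
  Nat.sInf_le ⟨w, hw, rfl⟩

lemma distToSet_le_Dst {S : Set (V3 n)} {u w : V3 n} (hw : w ∈ S) :
    distToSet (G3 n) u S ≤ Dst u w := by
  have := distToSet_le_dist (u := u) hw
  rwa [dist_eq] at this

lemma exists_distToSet {S : Set (V3 n)} {u : V3 n} (hS : S.Nonempty) :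
    ∃ w ∈ S, distToSet (G3 n) u S = Dst u w := by
  obtain ⟨w, hw, he⟩ := Nat.sInf_mem (hS.image ((G3 n).dist u))
  exact ⟨w, hw, by rw [distToSet, ← he, dist_eq]⟩

lemma le_distToSet {S : Set (V3 n)} {u : V3 n} {m : ℕ} (hS : S.Nonempty)
    (h : ∀ w ∈ S, m ≤ Dst u w) : m ≤ distToSet (G3 n) u S := by
  obtain ⟨w, hw, he⟩ := exists_distToSet (u := u) hS
  rw [he]; exact h w hw

lemma distToSet_empty (u : V3 n) : distToSet (G3 n) u ∅ = 0 := by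
  simp [distToSet]

lemma nd (a b : ℕ) : Nat.dist a b = a - b + (b - a) := rfl

lemma Dst_pv_pv (i i' : Fin n) (j j' : Fin 3) :
    Dst (pv i j) (pv i' j') = if i = i' then Nat.dist (j : ℕ) (j' : ℕ)
      else (j : ℕ) + (j' : ℕ) + 2 := rfl

lemma Dst_pv_hub (i : Fin n) (j : Fin 3) : Dst (pv i j) none = (j : ℕ) + 1 := rfl

lemma Dst_hub_pv (i : Fin n) (j : Fin 3) : Dst none (pv i j) = (j : ℕ) + 1 := rfl

lemma pv_inj {i i' : Fin n} {j j' : Fin 3} (h : (i : ℕ) = (i' : ℕ)) (h2 : (j : ℕ) = (j' : ℕ)) :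
    pv i j = pv i' j' := by
  have hi : i = i' := Fin.ext h
  subst hi
  have hj : j = j' := Fin.ext h2
  subst hj
  rfl

lemma Dst_pos {v w : V3 n} (h : v ≠ w) : 1 ≤ Dst v w := by
  rcases v with _ | ⟨i, j⟩ <;> rcases w with _ | ⟨i', j'⟩
  · exact absurd rfl h
  · simp [Dst_hub_pv]
  · simp [Dst_pv_hub]
  · show 1 ≤ Dst (pv i j) (pv i' j')
    rw [Dst_pv_pv]
    split_ifs with hii
    · subst hii
      have hjj : (j : ℕ) ≠ (j' : ℕ) := by
        intro he
        exact h (pv_inj rfl he)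
      rw [nd]; omega
    · omega

lemma resolve_lt {S : Set (V3 n)} {u v w0 : V3 n} {m : ℕ} (hw0 : w0 ∈ S)
    (hle : Dst u w0 + 1 ≤ m) (hge : ∀ w ∈ S, m ≤ Dst v w) :
    distToSet (G3 n) u S ≠ distToSet (G3 n) v S := by
  have h1 : distToSet (G3 n) u S ≤ Dst u w0 := distToSet_le_Dst hw0
  have h2 : m ≤ distToSet (G3 n) v S := le_distToSet ⟨w0, hw0⟩ hge
  omega

section Scheme

variable {k a : ℕ} {x y z : Fin n → ℕ}

/-- the coloring value -/
def cv (x y z : Fin n → ℕ) : V3 n → ℕ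
  | none => 0
  | some p => if (p.2 : ℕ) = 0 then x p.1 else if (p.2 : ℕ) = 1 then y p.1 else z p.1

/-- color class as a set -/
def SS (x y z : Fin n → ℕ) (γ : ℕ) : Set (V3 n) := {w | cv x y z w = γ}

lemma mem_SS {γ : ℕ} {w : V3 n} : w ∈ SS x y z γ ↔ cv x y z w = γ := Iff.rfl

lemma cv_hub : cv x y z none = 0 := rfl

lemma cv_pv0 (i : Fin n) {j : Fin 3} (hj : (j : ℕ) = 0) : cv x y z (pv i j) = x i := by
  simp [cv, pv, hj]

lemma cv_pv1 (i : Fin n) {j : Fin 3} (hj : (j : ℕ) = 1) : cv x y z (pv i j) = y i := by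
  simp [cv, pv, hj]

lemma cv_pv2 (i : Fin n) {j : Fin 3} (hj : (j : ℕ) = 2) : cv x y z (pv i j) = z i := by
  simp [cv, pv, hj]

/-- packaged lower bound over a color class -/
lemma ge_all {γ m : ℕ} (v : V3 n)
    (hhub : 0 = γ → m ≤ Dst v none)
    (h0 : ∀ i'', x i'' = γ → m ≤ Dst v (pv i'' ⟨0, by omega⟩))
    (h1 : ∀ i'', y i'' = γ → m ≤ Dst v (pv i'' ⟨1, by omega⟩))
    (h2 : ∀ i'', z i'' = γ → m ≤ Dst v (pv i'' ⟨2, by omega⟩)) :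
    ∀ w ∈ SS x y z γ, m ≤ Dst v w := by
  intro w hw
  rw [mem_SS] at hw
  rcases w with _ | ⟨i'', j''⟩
  · exact hhub hw
  · rcases j'' with ⟨jv, hjv⟩
    interval_cases jv
    · simp only [cv, show ((⟨0, hjv⟩ : Fin 3) : ℕ) = 0 from rfl, if_true, reduceIte] at hw
      exact h0 i'' hw
    · simp only [cv, show ((⟨1, hjv⟩ : Fin 3) : ℕ) = 1 from rfl, reduceIte] at hw
      exact h1 i'' hw
    · simp only [cv, show ((⟨2, hjv⟩ : Fin 3) : ℕ) = 2 from rfl, reduceIte] at hw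
      exact h2 i'' hw

variable {k a : ℕ}

/-- hypotheses of the construction -/
structure Good (k a : ℕ) (x y z : Fin n → ℕ) : Prop where
  ha : 1 ≤ a
  hak : a + 2 ≤ k
  hx : ∀ i, 1 ≤ x i ∧ x i ≤ a
  hy : ∀ i, y i < k ∧ y i ≠ x i ∧ y i ≠ z i
  hz : ∀ i, a + 1 ≤ z i ∧ z i < k

noncomputable def DT (x y z : Fin n → ℕ) (u : V3 n) (γ : ℕ) : ℕ :=
  distToSet (G3 n) u (SS x y z γ)

lemma ge_one {u : V3 n} {γ : ℕ} (h : cv x y z u ≠ γ) :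
    ∀ w ∈ SS x y z γ, 1 ≤ Dst u w := by
  intro w hw
  rw [mem_SS] at hw
  exact Dst_pos (fun he => h (by rw [he]; exact hw))

lemma resolve0 {u v : V3 n} {γ : ℕ} (hu : cv x y z u = γ) (hv : cv x y z v ≠ γ) :
    DT x y z u γ ≠ DT x y z v γ := by
  refine resolve_lt (w0 := u) (mem_SS.mpr hu) ?_ (ge_one hv)
  rw [Dst_self]

/-- hub vs leg vertex -/
lemma resA (H : Good k a x y z) (i : Fin n) (j : Fin 3) :
    ∃ γ, γ < k ∧ DT x y z (none : V3 n) γ ≠ DT x y z (pv i j) γ := by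
  rcases j with ⟨jv, hjv⟩
  by_cases hj0 : jv = 0
  · subst hj0
    refine ⟨x i, by have := (H.hx i).2; have := H.hak; omega, ?_⟩
    refine (resolve0 (cv_pv0 i rfl) ?_).symm
    rw [cv_hub]
    have := (H.hx i).1; omega
  · refine ⟨z i, (H.hz i).2, ?_⟩
    have hmem : pv i ⟨2, by omega⟩ ∈ SS x y z (z i) := mem_SS.mpr (cv_pv2 i rfl)
    refine (resolve_lt (m := 2) hmem ?_ ?_).symm
    · simp only [Dst_pv_pv, eq_self_iff_true, if_true, nd, Fin.val_mk]; omega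
    · refine ge_all none ?_ ?_ ?_ ?_
      · intro h0; have := (H.hz i).1; have := H.ha; omega
      · intro i'' hc; have := (H.hx i'').2; have := (H.hz i).1; omega
      · intro i'' _; simp only [Dst_hub_pv, Fin.val_mk]; omega
      · intro i'' _; simp only [Dst_hub_pv, Fin.val_mk]; omega

/-- same position, different `x` -/
lemma resC1 (H : Good k a x y z) {i i' : Fin n} (hxx : x i ≠ x i') (j : Fin 3) :
    ∃ γ, γ < k ∧ DT x y z (pv i j) γ ≠ DT x y z (pv i' j) γ := by
  have Hxk : x i < k := by have := (H.hx i).2; have := H.hak; omega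
  refine ⟨x i, Hxk, ?_⟩
  rcases j with ⟨jv, hjv⟩
  interval_cases jv
  · refine resolve0 (cv_pv0 i rfl) ?_
    rw [cv_pv0 i' rfl]
    exact fun h => hxx h.symm
  · by_cases hyx : y i' = x i
    · refine (resolve0 ((cv_pv1 i' rfl).trans hyx) ?_).symm
      rw [cv_pv1 i rfl]
      exact (H.hy i).2.1
    · refine resolve_lt (w0 := pv i ⟨0, by omega⟩) (m := 2) (mem_SS.mpr (cv_pv0 i rfl)) ?_ ?_
      · simp only [Dst_pv_pv, eq_self_iff_true, if_true, nd, Fin.val_mk]; omega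
      · refine ge_all _ ?_ ?_ ?_ ?_
        · intro h0; have := (H.hx i).1; omega
        · intro i'' hc
          by_cases hii2 : i' = i''
          · subst hii2; omega
          · simp only [Dst_pv_pv, if_neg hii2, Fin.val_mk]; omega
        · intro i'' hc
          by_cases hii2 : i' = i''
          · subst hii2; omega
          · simp only [Dst_pv_pv, if_neg hii2, Fin.val_mk]; omega
        · intro i'' hc; have := (H.hz i'').1; have := (H.hx i).2; omega
  · by_cases hyx : y i' = x i
    · refine (resolve_lt (w0 := pv i' ⟨1, by omega⟩) (m := 2)
        (mem_SS.mpr ((cv_pv1 i' rfl).trans hyx)) ?_ ?_).symm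
      · simp only [Dst_pv_pv, eq_self_iff_true, if_true, nd, Fin.val_mk]; omega
      · refine ge_all _ ?_ ?_ ?_ ?_
        · intro h0; have := (H.hx i).1; omega
        · intro i'' hc
          by_cases hii2 : i = i''
          · subst hii2; simp only [Dst_pv_pv, eq_self_iff_true, if_true, nd, Fin.val_mk]; omega
          · simp only [Dst_pv_pv, if_neg hii2, Fin.val_mk]; omega
        · intro i'' hc
          by_cases hii2 : i = i''
          · subst hii2; have := (H.hy i).2.1; omega
          · simp only [Dst_pv_pv, if_neg hii2, Fin.val_mk]; omega
        · intro i'' hc; have := (H.hz i'').1; have := (H.hx i).2; omega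
    · refine resolve_lt (w0 := pv i ⟨0, by omega⟩) (m := 3) (mem_SS.mpr (cv_pv0 i rfl)) ?_ ?_
      · simp only [Dst_pv_pv, eq_self_iff_true, if_true, nd, Fin.val_mk]; omega
      · refine ge_all _ ?_ ?_ ?_ ?_
        · intro h0; have := (H.hx i).1; omega
        · intro i'' hc
          by_cases hii2 : i' = i''
          · subst hii2; omega
          · simp only [Dst_pv_pv, if_neg hii2, Fin.val_mk]; omega
        · intro i'' hc
          by_cases hii2 : i' = i''
          · subst hii2; omega
          · simp only [Dst_pv_pv, if_neg hii2, Fin.val_mk]; omega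
        · intro i'' hc; have := (H.hz i'').1; have := (H.hx i).2; omega

/-- same position, same `x`, different `y`, with `y i ≠ 0` -/
lemma resC2 (H : Good k a x y z) {i i' : Fin n} (hxx : x i = x i') (hyy : y i ≠ y i')
    (hy0 : y i ≠ 0) (j : Fin 3) :
    ∃ γ, γ < k ∧ DT x y z (pv i j) γ ≠ DT x y z (pv i' j) γ := by
  refine ⟨y i, (H.hy i).1, ?_⟩
  rcases j with ⟨jv, hjv⟩
  interval_cases jv
  · refine resolve_lt (w0 := pv i ⟨1, by omega⟩) (m := 2) (mem_SS.mpr (cv_pv1 i rfl)) ?_ ?_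
    · simp only [Dst_pv_pv, eq_self_iff_true, if_true, nd, Fin.val_mk]; omega
    · refine ge_all _ ?_ ?_ ?_ ?_
      · intro h0; omega
      · intro i'' hc
        by_cases hii2 : i' = i''
        · subst hii2; have := (H.hy i).2.1; omega
        · simp only [Dst_pv_pv, if_neg hii2, Fin.val_mk]; omega
      · intro i'' hc
        by_cases hii2 : i' = i''
        · subst hii2; omega
        · simp only [Dst_pv_pv, if_neg hii2, Fin.val_mk]; omega
      · intro i'' hc
        by_cases hii2 : i' = i''
        · subst hii2; simp only [Dst_pv_pv, eq_self_iff_true, if_true, nd, Fin.val_mk]; omega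
        · simp only [Dst_pv_pv, if_neg hii2, Fin.val_mk]; omega
  · refine resolve0 (cv_pv1 i rfl) ?_
    rw [cv_pv1 i' rfl]
    exact fun h => hyy h.symm
  · by_cases hzy : z i' = y i
    · refine (resolve0 ((cv_pv2 i' rfl).trans hzy) ?_).symm
      rw [cv_pv2 i rfl]
      exact fun h => (H.hy i).2.2 h.symm
    · refine resolve_lt (w0 := pv i ⟨1, by omega⟩) (m := 2) (mem_SS.mpr (cv_pv1 i rfl)) ?_ ?_
      · simp only [Dst_pv_pv, eq_self_iff_true, if_true, nd, Fin.val_mk]; omega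
      · refine ge_all _ ?_ ?_ ?_ ?_
        · intro h0; omega
        · intro i'' hc
          by_cases hii2 : i' = i''
          · subst hii2; have := (H.hy i).2.1; omega
          · simp only [Dst_pv_pv, if_neg hii2, Fin.val_mk]; omega
        · intro i'' hc
          by_cases hii2 : i' = i''
          · subst hii2; omega
          · simp only [Dst_pv_pv, if_neg hii2, Fin.val_mk]; omega
        · intro i'' hc
          by_cases hii2 : i' = i''
          · subst hii2; omega
          · simp only [Dst_pv_pv, if_neg hii2, Fin.val_mk]; omega

/-- same position, same `x`, `y`, different `z` -/
lemma resC3 (H : Good k a x y z) {i i' : Fin n} (hxx : x i = x i') (hyy : y i = y i')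
    (hzz : z i ≠ z i') (j : Fin 3) :
    ∃ γ, γ < k ∧ DT x y z (pv i j) γ ≠ DT x y z (pv i' j) γ := by
  refine ⟨z i, (H.hz i).2, ?_⟩
  rcases j with ⟨jv, hjv⟩
  interval_cases jv
  · refine resolve_lt (w0 := pv i ⟨2, by omega⟩) (m := 3) (mem_SS.mpr (cv_pv2 i rfl)) ?_ ?_
    · simp only [Dst_pv_pv, eq_self_iff_true, if_true, nd, Fin.val_mk]; omega
    · refine ge_all _ ?_ ?_ ?_ ?_
      · intro h0; have := (H.hz i).1; have := H.ha; omega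
      · intro i'' hc; have := (H.hx i'').2; have := (H.hz i).1; omega
      · intro i'' hc
        by_cases hii2 : i' = i''
        · subst hii2; have := (H.hy i).2.2; omega
        · simp only [Dst_pv_pv, if_neg hii2, Fin.val_mk]; omega
      · intro i'' hc
        by_cases hii2 : i' = i''
        · subst hii2; omega
        · simp only [Dst_pv_pv, if_neg hii2, Fin.val_mk]; omega
  · refine resolve_lt (w0 := pv i ⟨2, by omega⟩) (m := 2) (mem_SS.mpr (cv_pv2 i rfl)) ?_ ?_
    · simp only [Dst_pv_pv, eq_self_iff_true, if_true, nd, Fin.val_mk]; omega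
    · refine ge_all _ ?_ ?_ ?_ ?_
      · intro h0; have := (H.hz i).1; have := H.ha; omega
      · intro i'' hc; have := (H.hx i'').2; have := (H.hz i).1; omega
      · intro i'' hc
        by_cases hii2 : i' = i''
        · subst hii2; have := (H.hy i).2.2; omega
        · simp only [Dst_pv_pv, if_neg hii2, Fin.val_mk]; omega
      · intro i'' hc
        by_cases hii2 : i' = i''
        · subst hii2; omega
        · simp only [Dst_pv_pv, if_neg hii2, Fin.val_mk]; omega
  · refine resolve0 (cv_pv2 i rfl) ?_
    rw [cv_pv2 i' rfl]
    exact fun h => hzz h.symm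

/-- different positions -/
lemma resD (H : Good k a x y z) (i i' : Fin n) (j j' : Fin 3) (hlt : (j : ℕ) < (j' : ℕ)) :
    ∃ γ, γ < k ∧ DT x y z (pv i j) γ ≠ DT x y z (pv i' j') γ := by
  rcases j with ⟨jv, hjv⟩
  rcases j' with ⟨j'v, hj'v⟩
  simp only [Fin.val_mk] at hlt
  interval_cases jv <;> interval_cases j'v
  · -- positions 0 and 1
    refine ⟨0, by have := H.hak; omega, ?_⟩
    by_cases hy0 : y i' = 0
    · refine (resolve0 ((cv_pv1 i' rfl).trans hy0) ?_).symm
      rw [cv_pv0 i rfl]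
      have := (H.hx i).1; omega
    · refine resolve_lt (w0 := none) (m := 2) (mem_SS.mpr (cv_hub (x := x))) ?_ ?_
      · simp only [Dst_pv_hub, Fin.val_mk]; omega
      · refine ge_all _ ?_ ?_ ?_ ?_
        · intro _; simp only [Dst_pv_hub, Fin.val_mk]; omega
        · intro i'' hc; have := (H.hx i'').1; omega
        · intro i'' hc
          by_cases hii2 : i' = i''
          · subst hii2; omega
          · simp only [Dst_pv_pv, if_neg hii2, Fin.val_mk]; omega
        · intro i'' hc; have := (H.hz i'').1; have := H.ha; omega
  · -- positions 0 and 2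
    refine ⟨x i, by have := (H.hx i).2; have := H.hak; omega, ?_⟩
    refine resolve0 (cv_pv0 i rfl) ?_
    rw [cv_pv2 i' rfl]
    have := (H.hz i').1; have := (H.hx i).2; omega
  · -- positions 1 and 2
    refine ⟨0, by have := H.hak; omega, ?_⟩
    by_cases hy0 : y i = 0
    · refine resolve0 ((cv_pv1 i rfl).trans hy0) ?_
      rw [cv_pv2 i' rfl]
      have := (H.hz i').1; have := H.ha; omega
    · by_cases hy0' : y i' = 0
      · refine (resolve_lt (w0 := pv i' ⟨1, by omega⟩) (m := 2)
          (mem_SS.mpr ((cv_pv1 i' rfl).trans hy0')) ?_ ?_).symm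
        · simp only [Dst_pv_pv, eq_self_iff_true, if_true, nd, Fin.val_mk]; omega
        · refine ge_all _ ?_ ?_ ?_ ?_
          · intro _; simp only [Dst_pv_hub, Fin.val_mk]; omega
          · intro i'' hc; have := (H.hx i'').1; omega
          · intro i'' hc
            by_cases hii2 : i = i''
            · subst hii2; omega
            · simp only [Dst_pv_pv, if_neg hii2, Fin.val_mk]; omega
          · intro i'' hc; have := (H.hz i'').1; have := H.ha; omega
      · refine resolve_lt (w0 := none) (m := 3) (mem_SS.mpr (cv_hub (x := x))) ?_ ?_
        · simp only [Dst_pv_hub, Fin.val_mk]; omega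
        · refine ge_all _ ?_ ?_ ?_ ?_
          · intro _; simp only [Dst_pv_hub, Fin.val_mk]; omega
          · intro i'' hc; have := (H.hx i'').1; omega
          · intro i'' hc
            by_cases hii2 : i' = i''
            · subst hii2; omega
            · simp only [Dst_pv_pv, if_neg hii2, Fin.val_mk]; omega
          · intro i'' hc; have := (H.hz i'').1; have := H.ha; omega

theorem scheme_locating (H : Good k a x y z)
    (hinj : ∀ i i' : Fin n, x i = x i' → y i = y i' → z i = z i' → i = i') :
    ∃ c : V3 n → Fin k, IsLocatingColoring (G3 n) c := by
  have hk : 0 < k := by have := H.hak; omega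
  have hcv : ∀ v, cv x y z v < k := by
    intro v
    rcases v with _ | ⟨i, j⟩
    · rw [cv_hub]; omega
    · rcases j with ⟨jv, hjv⟩
      interval_cases jv
      · rw [show (some ⟨i, ⟨0, hjv⟩⟩ : V3 n) = pv i ⟨0, hjv⟩ from rfl, cv_pv0 i rfl]
        have := (H.hx i).2; have := H.hak; omega
      · rw [show (some ⟨i, ⟨1, hjv⟩⟩ : V3 n) = pv i ⟨1, hjv⟩ from rfl, cv_pv1 i rfl]
        exact (H.hy i).1
      · rw [show (some ⟨i, ⟨2, hjv⟩⟩ : V3 n) = pv i ⟨2, hjv⟩ from rfl, cv_pv2 i rfl]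
        exact (H.hz i).2
  refine ⟨fun v => ⟨cv x y z v, hcv v⟩, ?_, ?_⟩
  · -- proper coloring
    intro u v hadj
    rw [G3, Palm, fromRel_adj] at hadj
    obtain ⟨hne, hrel⟩ := hadj
    simp only [Ne, Fin.mk.injEq]
    rcases u with _ | ⟨i, j⟩ <;> rcases v with _ | ⟨i', j'⟩
    · exact absurd rfl hne
    · have hj' : (j' : ℕ) = 0 := by
        rcases hrel with h | h
        · exact h
        · exact h.elim
      show ¬ (cv x y z none = cv x y z (pv i' j'))
      rw [cv_hub, cv_pv0 i' hj']
      have := (H.hx i').1; omega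
    · have hj : (j : ℕ) = 0 := by
        rcases hrel with h | h
        · exact h.elim
        · exact h
      show ¬ (cv x y z (pv i j) = cv x y z none)
      rw [cv_hub, cv_pv0 i hj]
      have := (H.hx i).1; omega
    · have hrel' : (i : ℕ) = (i' : ℕ) ∧ ((j' : ℕ) = (j : ℕ) + 1 ∨ (j : ℕ) = (j' : ℕ) + 1) := by
        rcases hrel with ⟨h1, h2⟩ | ⟨h1, h2⟩
        · exact ⟨h1, Or.inl h2⟩
        · exact ⟨h1.symm, Or.inr h2⟩
      have hii : i = i' := Fin.ext hrel'.1
      subst hii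
      have hrel'' := hrel'.2
      show ¬ (cv x y z (pv i j) = cv x y z (pv i j'))
      have h1 := H.hy i
      have h2 := H.hx i
      have h3 := H.hz i
      rcases j with ⟨jv, hjv⟩
      rcases j' with ⟨j'v, hj'v⟩
      simp only [Fin.val_mk] at hrel''
      have := H.ha; have := H.hak
      interval_cases jv <;> interval_cases j'v <;>
        simp [pv, cv] <;> omega
  · -- locating
    intro u v huv
    have hpre : ∀ γ : Fin k,
        (fun w => (⟨cv x y z w, hcv w⟩ : Fin k)) ⁻¹' {γ} = SS x y z (γ : ℕ) := by
      intro γ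
      ext w
      simp [SS, Fin.ext_iff]
    have key : ∃ γ, γ < k ∧ DT x y z u γ ≠ DT x y z v γ := by
      rcases u with _ | ⟨i, j⟩ <;> rcases v with _ | ⟨i', j'⟩
      · exact absurd rfl huv
      · exact resA H i' j'
      · obtain ⟨γ, hγ, hne⟩ := resA H i j
        exact ⟨γ, hγ, hne.symm⟩
      · rcases Nat.lt_trichotomy (j : ℕ) (j' : ℕ) with hlt | heq | hgt
        · exact resD H i i' j j' hlt
        · -- same position
          have hii : i ≠ i' := by
            intro he
            subst he
            exact huv (congrArg some (Sigma.ext rfl (heq_of_eq (Fin.ext heq))))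
          have hv' : pv i' j' = pv i' j := pv_inj rfl heq.symm
          rw [show (some ⟨i', j'⟩ : V3 n) = pv i' j' from rfl, hv']
          by_cases hxx : x i = x i'
          · by_cases hyy : y i = y i'
            · have hzz : z i ≠ z i' := fun hz => hii (hinj i i' hxx hyy hz)
              exact resC3 H hxx hyy hzz j
            · by_cases hy0 : y i = 0
              · have hy0' : y i' ≠ 0 := by
                  intro h
                  exact hyy (by omega)
                obtain ⟨γ, hγ, hne⟩ := resC2 H hxx.symm (Ne.symm hyy) hy0' j
                exact ⟨γ, hγ, hne.symm⟩
              · exact resC2 H hxx hyy hy0 j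
          · exact resC1 H hxx j
        · obtain ⟨γ, hγ, hne⟩ := resD H i' i j' j hgt
          exact ⟨γ, hγ, hne.symm⟩
    obtain ⟨γ, hγ, hne⟩ := key
    refine ⟨⟨γ, hγ⟩, ?_⟩
    rw [hpre]
    exact hne

end Scheme

def F0 : Fin 3 := ⟨0, by omega⟩
def F1 : Fin 3 := ⟨1, by omega⟩
def F2 : Fin 3 := ⟨2, by omega⟩
@[simp] lemma F0_val : (F0 : ℕ) = 0 := rfl
@[simp] lemma F1_val : (F1 : ℕ) = 1 := rfl
@[simp] lemma F2_val : (F2 : ℕ) = 2 := rfl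

section Lower

variable {k : ℕ} (c : V3 n → Fin k)

/-- color class of an arbitrary coloring -/
def CC (γ : Fin k) : Set (V3 n) := c ⁻¹' {γ}

lemma mem_CC {γ : Fin k} {w : V3 n} : w ∈ CC c γ ↔ c w = γ := Iff.rfl

/-- distance from the hub to a color class -/
noncomputable def dh (γ : Fin k) : ℕ := distToSet (G3 n) none (CC c γ)

lemma ge_one' {S : Set (V3 n)} {u : V3 n} (h : u ∉ S) : ∀ w ∈ S, 1 ≤ Dst u w :=
  fun w hw => Dst_pos (fun he => h (he ▸ hw))

lemma dTS_self_zero {u : V3 n} {γ : Fin k} (h : c u = γ) :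
    distToSet (G3 n) u (CC c γ) = 0 := by
  have h2 := distToSet_le_Dst (u := u) ((mem_CC c).mpr h)
  rw [Dst_self] at h2
  omega

lemma one_le_dTS {u : V3 n} {γ : Fin k} {w0 : V3 n} (h : c u ≠ γ) (hw0 : w0 ∈ CC c γ) :
    1 ≤ distToSet (G3 n) u (CC c γ) :=
  le_distToSet ⟨w0, hw0⟩ (ge_one' (fun hu => h (mem_CC c |>.mp hu)))

lemma dh_le {γ : Fin k} {w : V3 n} (hw : w ∈ CC c γ) : dh c γ ≤ Dst none w :=
  distToSet_le_Dst hw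

/-- triangle through the hub -/
lemma Dst_tri (i : Fin n) (j : Fin 3) (w : V3 n) :
    Dst (pv i j) w ≤ (j : ℕ) + 1 + Dst none w := by
  rcases w with _ | ⟨i'', j''⟩
  · rw [Dst_pv_hub, Dst_nn]
  · show Dst (pv i j) (pv i'' j'') ≤ (j : ℕ) + 1 + Dst none (pv i'' j'')
    rw [Dst_pv_pv, Dst_hub_pv]
    split_ifs
    · rw [nd]; omega
    · omega

/-- value of `distToSet` at a position-1 vertex, for colors not on positions 1,2 of its leg -/
lemma claimB (i : Fin n) (γ : Fin k) (hne : (CC c γ).Nonempty)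
    (h0 : γ ≠ c (pv i F0)) (h1 : γ ≠ c (pv i F1)) :
    distToSet (G3 n) (pv i F0) (CC c γ) =
      if γ = c (pv i F2) then min 2 (1 + dh c γ) else 1 + dh c γ := by
  refine Nat.le_antisymm ?_ ?_
  · have hle1 : distToSet (G3 n) (pv i F0) (CC c γ) ≤ 1 + dh c γ := by
      obtain ⟨w, hw, he⟩ := exists_distToSet (u := (none : V3 n)) hne
      have h2 := distToSet_le_Dst (u := pv i F0) hw
      have h3 := Dst_tri i F0 w
      simp only [F0_val] at h3
      rw [dh, he]
      omega
    split_ifs with hz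
    · have h4 : distToSet (G3 n) (pv i F0) (CC c γ) ≤ 2 := by
        have := distToSet_le_Dst (u := pv i F0) (mem_CC c |>.mpr hz.symm)
        rw [Dst_pv_pv, if_pos rfl, nd] at this
        simp only [F0_val, F2_val] at this
        omega
      omega
    · exact hle1
  · refine le_distToSet hne ?_
    intro w hw
    have hd := dh_le c hw
    rcases w with _ | ⟨i'', j''⟩
    · rw [Dst_nn] at hd
      rw [Dst_pv_hub]
      split_ifs <;> omega
    · rcases j'' with ⟨jv, hjv⟩
      interval_cases jv
      · by_cases hii : i'' = i
        · subst hii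
          exact absurd (mem_CC c |>.mp hw).symm h0
        · simp at hd
          show _ ≤ Dst (pv i F0) (pv i'' ⟨0, hjv⟩)
          rw [Dst_pv_pv, if_neg (show ¬ i = i'' from fun he => hii he.symm)]
          simp only [Fin.val_mk, F0_val] at hd ⊢
          split_ifs <;> omega
      · by_cases hii : i'' = i
        · subst hii
          exact absurd (mem_CC c |>.mp hw).symm h1
        · simp at hd
          show _ ≤ Dst (pv i F0) (pv i'' ⟨1, hjv⟩)
          rw [Dst_pv_pv, if_neg (show ¬ i = i'' from fun he => hii he.symm)]
          simp only [Fin.val_mk, F0_val] at hd ⊢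
          split_ifs <;> omega
      · by_cases hii : i'' = i
        · subst hii
          have hz : γ = c (pv i'' F2) := (mem_CC c |>.mp hw).symm
          rw [if_pos hz]
          show _ ≤ Dst (pv i'' F0) (pv i'' ⟨2, hjv⟩)
          rw [Dst_pv_pv, if_pos rfl, nd]
          simp only [Fin.val_mk, F0_val]
          omega
        · simp at hd
          show _ ≤ Dst (pv i F0) (pv i'' ⟨2, hjv⟩)
          rw [Dst_pv_pv, if_neg (show ¬ i = i'' from fun he => hii he.symm)]
          simp only [Fin.val_mk, F0_val] at hd ⊢
          split_ifs <;> omega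

lemma pv_ne {i i' : Fin n} {j j' : Fin 3} (hii : i ≠ i') : pv i j ≠ pv i' j' := by
  intro he
  injection he with h
  exact hii (congrArg Sigma.fst h)

theorem lower_bound {k : ℕ} (c : V3 n → Fin k) (hc : IsLocatingColoring (G3 n) c) :
    4 * n ≤ k ^ 3 := by
  classical
  obtain ⟨hprop, hloc⟩ := hc
  have hYX : ∀ i : Fin n, c (pv i F0) ≠ c (pv i F1) :=
    fun i => hprop _ _ (adj_step i _ _ rfl)
  have hH : ∀ i : Fin n, c none ≠ c (pv i F0) :=
    fun i => hprop _ _ (adj_hub i _ rfl)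
  have hdX : ∀ i : Fin n, dh c (c (pv i F0)) = 1 := by
    intro i
    refine Nat.le_antisymm ?_ (one_le_dTS c (hH i) (w0 := pv i F0) rfl)
    have := dh_le c (γ := c (pv i F0)) (w := pv i F0) rfl
    rwa [Dst_hub_pv] at this
  have hdh0 : dh c (c none) = 0 := dTS_self_zero c rfl
  set FA : Finset (Fin k) := Finset.univ.filter (fun γ => dh c γ = 1) with hFA
  set FB : Finset (Fin k) := Finset.univ.filter (fun γ => 2 ≤ dh c γ) with hFB
  set A := FA.card
  set B := FB.card
  set T : Finset (Fin k × Fin k × Option (Fin k)) :=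
    FA ×ˢ Finset.univ ×ˢ (insert none (FB.image some)) with hT
  set φ : Fin n → Fin k × Fin k × Option (Fin k) :=
    fun i => (c (pv i F0), c (pv i F1),
      if 2 ≤ dh c (c (pv i F2)) then some (c (pv i F2)) else none) with hφ
  have hmaps : ∀ i, φ i ∈ T := by
    intro i
    rw [hT, hφ]
    simp only [Finset.mem_product]
    refine ⟨by simp only [hFA, Finset.mem_filter]; exact ⟨Finset.mem_univ _, hdX i⟩, by simp, ?_⟩
    split_ifs with h2
    · exact Finset.mem_insert_of_mem (Finset.mem_image_of_mem some (by simp only [hFB, Finset.mem_filter]; exact ⟨Finset.mem_univ _, h2⟩))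
    · exact Finset.mem_insert_self _ _
  have hinj : Function.Injective φ := by
    intro i i' he
    by_contra hii
    rw [hφ] at he
    have he1 : c (pv i F0) = c (pv i' F0) := congrArg Prod.fst he
    have he2 : c (pv i F1) = c (pv i' F1) := congrArg (fun p => p.2.1) he
    have he3 : (if 2 ≤ dh c (c (pv i F2)) then some (c (pv i F2)) else none)
        = (if 2 ≤ dh c (c (pv i' F2)) then some (c (pv i' F2)) else none) :=
      congrArg (fun p => p.2.2) he
    have hzz : (c (pv i F2) = c (pv i' F2)) ∨
        (dh c (c (pv i F2)) ≤ 1 ∧ dh c (c (pv i' F2)) ≤ 1) := by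
      split_ifs at he3 with h2 h2' <;>
        first
          | exact Or.inl (Option.some_injective _ he3)
          | exact Or.inr ⟨by omega, by omega⟩
          | simp at he3
    have hall : ∀ γ : Fin k, distToSet (G3 n) (pv i F0) (CC c γ)
        = distToSet (G3 n) (pv i' F0) (CC c γ) := by
      intro γ
      rcases Set.eq_empty_or_nonempty (CC c γ) with hem | hne
      · rw [CC] at hem
        rw [show CC c γ = (∅ : Set (V3 n)) from hem, distToSet_empty, distToSet_empty]
      · by_cases hγ0 : γ = c (pv i F0)
        · rw [dTS_self_zero c (show c (pv i _) = γ from hγ0.symm),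
            dTS_self_zero c (show c (pv i' _) = γ from (hγ0.trans he1).symm)]
        · by_cases hγ1 : γ = c (pv i F1)
          · have val1 : ∀ l : Fin n, γ = c (pv l F1) → γ ≠ c (pv l F0) →
                distToSet (G3 n) (pv l F0) (CC c γ) = 1 := by
              intro l hl hlx
              refine Nat.le_antisymm ?_ (one_le_dTS c (fun hcl => hlx hcl.symm)
                (w0 := pv l F1) hl.symm)
              have := distToSet_le_Dst (u := pv l F0)
                (mem_CC c |>.mpr (show c (pv l F1) = γ from hl.symm))
              rw [Dst_pv_pv, if_pos rfl, nd] at this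
              simp only [F0_val, F1_val] at this
              omega
            rw [val1 i hγ1 hγ0, val1 i' (hγ1.trans he2) (fun h => hγ0 (h.trans he1.symm))]
          · rw [claimB c i γ hne hγ0 hγ1,
              claimB c i' γ hne (fun h => hγ0 (h.trans he1.symm)) (fun h => hγ1 (h.trans he2.symm))]
            by_cases hz : γ = c (pv i F2) <;>
              by_cases hz' : γ = c (pv i' F2)
            · rw [if_pos hz, if_pos hz']
            · rw [if_pos hz, if_neg hz']
              rcases hzz with hzz | ⟨h2, h2'⟩
              · exact absurd (hz.trans hzz) hz'
              · have hle : dh c γ ≤ 1 := by rw [hz]; exact h2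
                omega
            · rw [if_neg hz, if_pos hz']
              rcases hzz with hzz | ⟨h2, h2'⟩
              · exact absurd (hz'.trans hzz.symm) hz
              · have hle : dh c γ ≤ 1 := by rw [hz']; exact h2'
                omega
            · rw [if_neg hz, if_neg hz']
    obtain ⟨γ, hneq⟩ := hloc (pv i F0) (pv i' F0) (pv_ne hii)
    exact hneq (hall γ)
  have hn : n ≤ T.card := by
    have h1 := Finset.card_le_card_of_injOn (s := (Finset.univ : Finset (Fin n))) (t := T) φ
      (fun i _ => hmaps i) (fun i _ i' _ h => hinj h)
    simpa using h1
  have hTcard : T.card = A * (k * (B + 1)) := by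
    rw [hT, Finset.card_product, Finset.card_product, Finset.card_insert_of_notMem (by simp),
      Finset.card_image_of_injective _ (Option.some_injective _), Finset.card_univ,
      Fintype.card_fin]
  have hABk : A + B + 1 ≤ k := by
    have hdisj : Disjoint FA FB := by
      rw [Finset.disjoint_left]
      intro γ h1 h2
      rw [hFA, Finset.mem_filter] at h1
      rw [hFB, Finset.mem_filter] at h2
      omega
    have hsub : FA ∪ FB ⊆ Finset.univ.erase (c none) := by
      rw [Finset.subset_erase]
      refine ⟨Finset.subset_univ _, ?_⟩
      intro hmem
      rcases Finset.mem_union.mp hmem with h1 | h1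
      · rw [hFA, Finset.mem_filter] at h1; omega
      · rw [hFB, Finset.mem_filter] at h1; omega
    have hcards := Finset.card_le_card hsub
    rw [Finset.card_union_of_disjoint hdisj] at hcards
    rw [Finset.card_erase_of_mem (Finset.mem_univ _), Finset.card_univ, Fintype.card_fin]
      at hcards
    have hk : 0 < k := Fin.pos_iff_nonempty.mpr ⟨c none⟩
    omega
  have hq : 4 * (A * (B + 1)) ≤ k ^ 2 := by
    zify
    nlinarith [sq_nonneg ((A : ℤ) - (B + 1)), hABk]
  calc 4 * n ≤ 4 * (A * (k * (B + 1))) := by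
        have := hn.trans_eq hTcard
        omega
    _ = (4 * (A * (B + 1))) * k := by ring
    _ ≤ k ^ 2 * k := Nat.mul_le_mul_right _ hq
    _ = k ^ 3 := by ring

end Lower

theorem exists_locating_coloring {k a : ℕ} (ha : 1 ≤ a) (hak : a + 2 ≤ k)
    (hn : n ≤ a * (k - 1 - a) * (k - 2)) :
    ∃ c : V3 n → Fin k, IsLocatingColoring (G3 n) c := by
  set b := k - 1 - a with hb
  have hb1 : 1 ≤ b := by omega
  have hab : 0 < a * b := Nat.mul_pos ha hb1
  set X : Fin n → ℕ := fun i => (i : ℕ) % a + 1 with hX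
  set Zf : Fin n → ℕ := fun i => a + 1 + ((i : ℕ) / a) % b with hZ
  set M : Fin n → ℕ := fun i => (i : ℕ) / a / b with hM
  set Y : Fin n → ℕ := fun i =>
    if M i < X i then M i else if M i + 1 < Zf i then M i + 1 else M i + 2 with hY
  have hMlt : ∀ i : Fin n, M i < k - 2 := by
    intro i
    have hi : (i : ℕ) < n := i.isLt
    have h2 : (i : ℕ) < a * b * (k - 2) := lt_of_lt_of_le hi hn
    have h3 : (i : ℕ) / a / b = (i : ℕ) / (a * b) := Nat.div_div_eq_div_mul _ _ _
    rw [hM]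
    simp only
    rw [h3]
    rw [Nat.div_lt_iff_lt_mul hab]
    rw [mul_comm] at h2
    exact h2
  have hGx : ∀ i, 1 ≤ X i ∧ X i ≤ a := by
    intro i
    have := Nat.mod_lt (i : ℕ) (show 0 < a by omega)
    constructor <;> simp only [hX] <;> omega
  have hGz : ∀ i, a + 1 ≤ Zf i ∧ Zf i < k := by
    intro i
    have := Nat.mod_lt ((i : ℕ) / a) (show 0 < b by omega)
    constructor <;> simp only [hZ] <;> omega
  have hGy : ∀ i, Y i < k ∧ Y i ≠ X i ∧ Y i ≠ Zf i := by
    intro i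
    have h1 := hMlt i
    have h2 := hGx i
    have h3 := hGz i
    simp only [hY]
    split_ifs <;> omega
  have hinj : ∀ i i' : Fin n, X i = X i' → Y i = Y i' → Zf i = Zf i' → i = i' := by
    intro i i' h1 h2 h3
    have hx2 := hGx i; have hx2' := hGx i'
    have hz2 := hGz i; have hz2' := hGz i'
    have hm := hMlt i; have hm' := hMlt i'
    have hMeq : M i = M i' := by
      simp only [hY] at h2
      split_ifs at h2 <;> omega
    have hmod : (i : ℕ) % a = (i' : ℕ) % a := by
      simp only [hX] at h1; omega
    have hmodb : ((i : ℕ) / a) % b = ((i' : ℕ) / a) % b := by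
      simp only [hZ] at h3; omega
    have hMeq' : (i : ℕ) / a / b = (i' : ℕ) / a / b := hMeq
    have recon : ∀ m : ℕ, m % a + a * (m / a % b + b * (m / a / b)) = m := by
      intro m
      rw [Nat.mod_add_div (m / a) b, Nat.mod_add_div]
    have hval : (i : ℕ) = (i' : ℕ) := by
      rw [← recon (i : ℕ), ← recon (i' : ℕ), hmod, hmodb, hMeq']
    exact Fin.ext hval
  exact scheme_locating
    { ha := ha, hak := hak, hx := hGx, hy := hGy, hz := hGz } hinj

/-- the locating chromatic number of `S_n(3)` -/
noncomputable def L (n : ℕ) : ℕ := locatingChromaticNumber (G3 n)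

lemma chi_set_nonempty (n : ℕ) :
    {k : ℕ | ∃ c : V3 n → Fin k, IsLocatingColoring (G3 n) c}.Nonempty := by
  refine ⟨n + 3, exists_locating_coloring (a := 1) le_rfl (by omega) ?_⟩
  have h1 : n + 3 - 1 - 1 = n + 1 := by omega
  have h2 : n + 3 - 2 = n + 1 := by omega
  rw [h1, h2, one_mul]
  have : n + 1 ≤ (n + 1) * (n + 1) := Nat.le_mul_of_pos_left _ (by omega)
  omega

lemma chi_lower (n : ℕ) : 4 * n ≤ (L n) ^ 3 := by
  obtain ⟨c, hc⟩ := Nat.sInf_mem (chi_set_nonempty n)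
  exact lower_bound c hc

lemma chi_upper (n : ℕ) {k a : ℕ} (ha : 1 ≤ a) (hak : a + 2 ≤ k)
    (hn : n ≤ a * (k - 1 - a) * (k - 2)) : L n ≤ k :=
  Nat.sInf_le (exists_locating_coloring ha hak hn)

lemma chi_upper_real (n : ℕ) :
    (L n : ℝ) ≤ (4 * (n : ℝ)) ^ ((1 : ℝ) / 3) + 4 := by
  set x : ℝ := (4 * (n : ℝ)) ^ ((1 : ℝ) / 3) with hxdef
  have hx0 : 0 ≤ x := Real.rpow_nonneg (by positivity) _
  set K : ℕ := ⌈x⌉₊ + 3 with hKdef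
  have hK : L n ≤ K := by
    refine chi_upper n (a := (K - 1) / 2) (by omega) (by omega) ?_
    -- 4 n ≤ (K-2)^3
    have h1 : 4 * n ≤ (K - 2) ^ 3 := by
      have hceil : x ≤ (⌈x⌉₊ : ℝ) := Nat.le_ceil x
      have hK2 : ((K - 2 : ℕ) : ℝ) = (⌈x⌉₊ : ℝ) + 1 := by
        have : K - 2 = ⌈x⌉₊ + 1 := by omega
        rw [this]; push_cast; ring
      have hxK : x ≤ ((K - 2 : ℕ) : ℝ) := by rw [hK2]; linarith
      have hx3 : x ^ (3 : ℕ) = 4 * (n : ℝ) := by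
        rw [hxdef, ← Real.rpow_natCast ((4 * (n : ℝ)) ^ ((1 : ℝ) / 3)) 3,
          ← Real.rpow_mul (by positivity)]
        norm_num
      have hcube : (4 * (n : ℝ)) ≤ ((K - 2 : ℕ) : ℝ) ^ (3 : ℕ) := by
        rw [← hx3]
        exact pow_le_pow_left₀ hx0 hxK 3
      exact_mod_cast hcube
    -- (K-2)^2 ≤ 4 * (a * (K-1-a))
    set q := (K - 1) / 2 with hq
    have hpar : K - 1 = 2 * q ∨ K - 1 = 2 * q + 1 := by omega
    have h2 : (K - 2) ^ 2 ≤ 4 * (q * (K - 1 - q)) := by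
      have hq1 : 1 ≤ q := by omega
      rcases hpar with hp | hp
      · have hr : K - 1 - q = q := by omega
        have hk2 : K - 2 = 2 * q - 1 := by omega
        rw [hr, hk2]
        calc (2 * q - 1) ^ 2 ≤ (2 * q) ^ 2 := Nat.pow_le_pow_left (by omega) 2
          _ = 4 * (q * q) := by ring
      · have hr : K - 1 - q = q + 1 := by omega
        have hk2 : K - 2 = 2 * q := by omega
        rw [hr, hk2]
        calc (2 * q) ^ 2 = 4 * (q * q) := by ring
          _ ≤ 4 * (q * (q + 1)) := by
              have := Nat.mul_le_mul_left q (show q ≤ q + 1 by omega)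
              omega
    have h3 : (K - 2) ^ 3 ≤ 4 * (q * (K - 1 - q) * (K - 2)) :=
      calc (K - 2) ^ 3 = (K - 2) ^ 2 * (K - 2) := by ring
        _ ≤ (4 * (q * (K - 1 - q))) * (K - 2) := Nat.mul_le_mul_right _ h2
        _ = 4 * (q * (K - 1 - q) * (K - 2)) := by ring
    omega
  have hKx : (K : ℝ) ≤ x + 4 := by
    have h5 : (⌈x⌉₊ : ℝ) < x + 1 := Nat.ceil_lt_add_one hx0
    have h6 : (K : ℝ) = (⌈x⌉₊ : ℝ) + 3 := by rw [hKdef]; push_cast; ring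
    linarith
  calc (L n : ℝ) ≤ (K : ℝ) := by exact_mod_cast hK
    _ ≤ x + 4 := hKx

lemma chi_lower_real (n : ℕ) :
    (4 * (n : ℝ)) ^ ((1 : ℝ) / 3) ≤ (L n : ℝ) := by
  have h1 : (4 * (n : ℝ)) ≤ ((L n : ℝ)) ^ (3 : ℕ) := by exact_mod_cast chi_lower n
  have h2 : (4 * (n : ℝ)) ^ ((1 : ℝ) / 3) ≤ (((L n : ℝ)) ^ (3 : ℕ)) ^ ((1 : ℝ) / 3) :=
    Real.rpow_le_rpow (by positivity) h1 (by norm_num)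
  have h3 : (((L n : ℝ)) ^ (3 : ℕ)) ^ ((1 : ℝ) / 3) = (L n : ℝ) := by
    rw [← Real.rpow_natCast ((L n : ℝ)) 3, ← Real.rpow_mul (by positivity)]
    norm_num
  linarith

end PalmAux

/-- `χ_L(S_n(3)) = (1 + o(1))·(4n)^{1/3}` as `n → ∞`, i.e.
`lim_{n→∞} χ_L(S_n(3)) / (4n)^{1/3} = 1`. -/
theorem locatingChromaticNumber_regularPalm_three_asymptotic :
    Filter.Tendsto
      (fun n : ℕ =>
        (locatingChromaticNumber (Palm n (fun _ => 3)) : ℝ) /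
          (4 * (n : ℝ)) ^ ((1 : ℝ) / 3))
      Filter.atTop (nhds 1) := by
  open PalmAux in
  have hxpos : ∀ n : ℕ, 1 ≤ n → (0 : ℝ) < (4 * (n : ℝ)) ^ ((1 : ℝ) / 3) := by
    intro n hn
    apply Real.rpow_pos_of_pos
    have : (1 : ℝ) ≤ (n : ℝ) := by exact_mod_cast hn
    linarith
  have hxtop : Filter.Tendsto (fun n : ℕ => (4 * (n : ℝ)) ^ ((1 : ℝ) / 3))
      Filter.atTop Filter.atTop := by
    apply (tendsto_rpow_atTop (by norm_num : (0:ℝ) < 1/3)).comp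
    exact (tendsto_natCast_atTop_atTop (R := ℝ)).const_mul_atTop (by norm_num)
  have hg : Filter.Tendsto (fun n : ℕ => 1 + 4 / (4 * (n : ℝ)) ^ ((1 : ℝ) / 3))
      Filter.atTop (nhds 1) := by
    have h0 : Filter.Tendsto (fun n : ℕ => 4 / (4 * (n : ℝ)) ^ ((1 : ℝ) / 3))
        Filter.atTop (nhds 0) := by
      have := hxtop.inv_tendsto_atTop
      have h4 := this.const_mul (4 : ℝ)
      simpa [div_eq_mul_inv] using h4
    have := h0.const_add (1 : ℝ)
    simpa using this
  refine tendsto_of_tendsto_of_tendsto_of_le_of_le' tendsto_const_nhds hg ?_ ?_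
  · filter_upwards [Filter.eventually_ge_atTop 1] with n hn
    have hx := hxpos n hn
    rw [le_div_iff₀ hx, one_mul]
    exact PalmAux.chi_lower_real n
  · filter_upwards [Filter.eventually_ge_atTop 1] with n hn
    have hx := hxpos n hn
    rw [div_le_iff₀ hx]
    have := PalmAux.chi_upper_real n
    calc (locatingChromaticNumber (Palm n (fun _ => 3)) : ℝ)
        ≤ (4 * (n : ℝ)) ^ ((1 : ℝ) / 3) + 4 := this
      _ = (1 + 4 / (4 * (n : ℝ)) ^ ((1 : ℝ) / 3)) * (4 * (n : ℝ)) ^ ((1 : ℝ) / 3) := by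
          field_simp
      _ = _ := by ring
end
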